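/- If P is a lattice-face d-polytope, then π restricts to a bijection from L(NB(P)) onto L(π(P)), and likewise to a bijection from L(PB(P)) onto L(π(P)). -/

import Mathlib

open MeasureTheory Polynomial

noncomputable section

/-- The lattice points of `ℝ^d`: points all of whose coordinates are integers. -/
def latticePts (d : ℕ) : Set (Fin d → ℝ) := {x | ∀ i, ∃ n : ℤ, x i = (n : ℝ)}

/-- The projection `π^{(d-k)} : ℝ^d → ℝ^k` forgetting the last `d - k` coordinates
(for `k ≤ d`; junk value `0` in out-of-range coordinates otherwise). -/
def projTo (d k : ℕ) (x : Fin d → ℝ) : Fin k → ℝ :=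
  fun i => if h : (i : ℕ) < d then x ⟨(i : ℕ), h⟩ else 0

/-- A polytope with vertex set `V ⊆ ℝ^d` is a lattice-face polytope if for every
`0 ≤ k ≤ d-1` and every `(k+1)`-subset `U ⊆ V`, `π^{(d-k)}(aff(U) ∩ ℤ^d) = ℤ^k`. -/
def IsLatticeFace (d : ℕ) (V : Finset (Fin d → ℝ)) : Prop :=
  ∀ k : ℕ, k < d → ∀ U : Finset (Fin d → ℝ), U ⊆ V → U.card = k + 1 →
    projTo d k '' ((affineSpan ℝ (U : Set (Fin d → ℝ)) : Set (Fin d → ℝ)) ∩ latticePts d)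
      = latticePts k

/-- The last coordinate of a point of `ℝ^d`. -/
def lastCoord (d : ℕ) (x : Fin d → ℝ) : ℝ :=
  if h : 0 < d then x ⟨d - 1, by omega⟩ else 0

/-- The negative boundary `NB(P)`: points of `P` minimizing the last coordinate in
their fiber over `π(P)`. -/
def NB (d : ℕ) (P : Set (Fin d → ℝ)) : Set (Fin d → ℝ) :=
  {x | x ∈ P ∧ ∀ y ∈ P, projTo d (d - 1) y = projTo d (d - 1) x → lastCoord d x ≤ lastCoord d y}

/-- The positive boundary `PB(P)`: points of `P` maximizing the last coordinate in
their fiber over `π(P)`. -/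
def PB (d : ℕ) (P : Set (Fin d → ℝ)) : Set (Fin d → ℝ) :=
  {x | x ∈ P ∧ ∀ y ∈ P, projTo d (d - 1) y = projTo d (d - 1) x → lastCoord d y ≤ lastCoord d x}

/-- `i(P,m)`: the number of lattice points in the dilate `mP`. -/
def ehr (d : ℕ) (P : Set (Fin d → ℝ)) (m : ℕ) : ℕ :=
  (latticePts d ∩ (fun x => (m : ℝ) • x) '' P).ncard

/-- `î(P,m)`: the number of lattice points in the interior of the dilate `mP`. -/
def intEhr (d : ℕ) (P : Set (Fin d → ℝ)) (m : ℕ) : ℕ :=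
  (latticePts d ∩ interior ((fun x => (m : ℝ) • x) '' P)).ncard

/-- The `j`-th coordinate (`0`-indexed) of a point of `ℝ^d`, junk value `0` if `j ≥ d`. -/
def coordN {d : ℕ} (w : Fin d → ℝ) (j : ℕ) : ℝ := if h : j < d then w ⟨j, h⟩ else 0

/-- The vertex occurring in row `p` (0-indexed) of the matrices `X(σ,k)`, `Y(σ,k)`:
vertex `v_{σ(p+1)}` for `p < k`, and `v_{d+1}` for the last row of `X(σ,k)`. -/
def rowVert (d : ℕ) (v : Fin (d + 1) → Fin d → ℝ) (σ : Equiv.Perm (Fin d)) (k p : ℕ) :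
    Fin d → ℝ :=
  if h : p < k ∧ p < d then v (Fin.castSucc (σ ⟨p, h.2⟩)) else v (Fin.last d)

/-- The matrix `X(σ,k)` with rows `(1, x_{σ(i),1},…,x_{σ(i),k})` for `1 ≤ i ≤ k`
followed by `(1, x_{d+1,1},…,x_{d+1,k})`. -/
def Xmat (d : ℕ) (v : Fin (d + 1) → Fin d → ℝ) (σ : Equiv.Perm (Fin d)) (k : ℕ) :
    Matrix (Fin (k + 1)) (Fin (k + 1)) ℝ :=
  Matrix.of fun p q =>
    if (q : ℕ) = 0 then 1 else coordN (rowVert d v σ k (p : ℕ)) ((q : ℕ) - 1)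

/-- The matrix `Y(σ,k)` with rows `(1, x_{σ(i),1},…,x_{σ(i),k-1})` for `1 ≤ i ≤ k`. -/
def Ymat (d : ℕ) (v : Fin (d + 1) → Fin d → ℝ) (σ : Equiv.Perm (Fin d)) (k : ℕ) :
    Matrix (Fin k) (Fin k) ℝ :=
  Matrix.of fun p q =>
    if (q : ℕ) = 0 then 1 else coordN (rowVert d v σ k (p : ℕ)) ((q : ℕ) - 1)

/-- The matrix `X̃(σ,k;x)`: `X(σ,k)` with its last row replaced by `(1, x_1,…,x_k)`. -/
def Xtil (d : ℕ) (v : Fin (d + 1) → Fin d → ℝ) (σ : Equiv.Perm (Fin d)) (k : ℕ)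
    (x : Fin d → ℝ) : Matrix (Fin (k + 1)) (Fin (k + 1)) ℝ :=
  Matrix.of fun p q =>
    if (q : ℕ) = 0 then 1
    else if (p : ℕ) < k then coordN (rowVert d v σ k (p : ℕ)) ((q : ℕ) - 1)
    else coordN x ((q : ℕ) - 1)

/-- `z(σ,k) = det X(σ,k) / det Y(σ,k)`; note `z(σ,0) = 1`. -/
def zc (d : ℕ) (v : Fin (d + 1) → Fin d → ℝ) (σ : Equiv.Perm (Fin d)) (k : ℕ) : ℝ :=
  (Xmat d v σ k).det / (Ymat d v σ k).det

/-- The minor `m(σ,k;j)` of `X̃(σ,k;x)` obtained by deleting the last row and the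
`(j+1)`-st column (it does not depend on `x`). -/
def minorM (d : ℕ) (v : Fin (d + 1) → Fin d → ℝ) (σ : Equiv.Perm (Fin d)) (k j : ℕ) : ℝ :=
  (Matrix.of fun p q : Fin k =>
    Xmat d v σ k (Fin.castSucc p) (if (q : ℕ) < j + 1 then Fin.castSucc q else q.succ)).det

/-- A `d`-simplex with vertices `v_1, …, v_{d+1}` is in general position if its vertices
are affinely independent and for every `0 ≤ k ≤ d-1` and every `(k+1)`-subset `U` of the
vertex set, `π^{(d-k)}(conv U)` is a `k`-simplex. -/
def SimplexGenPos (d : ℕ) (v : Fin (d + 1) → Fin d → ℝ) : Prop :=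
  AffineIndependent ℝ v ∧
    ∀ k : ℕ, k < d → ∀ U : Finset (Fin (d + 1)), U.card = k + 1 →
      affineSpan ℝ (projTo d k '' (v '' (U : Set (Fin (d + 1))))) = ⊤

/-- A lattice-face `d`-simplex, given by its `d+1` affinely independent vertices. -/
def SimplexLatticeFace (d : ℕ) (v : Fin (d + 1) → Fin d → ℝ) : Prop :=
  AffineIndependent ℝ v ∧
    ∀ k : ℕ, k < d → ∀ U : Finset (Fin (d + 1)), U.card = k + 1 →
      projTo d k ''
          ((affineSpan ℝ (v '' (U : Set (Fin (d + 1)))) : Set (Fin d → ℝ)) ∩ latticePts d)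
        = latticePts k

open scoped Classical in
/-- The sign of a facet `F` of `P`: `+1` if `F` has a relative-interior point on the
positive boundary, `-1` if on the negative boundary, `0` otherwise. -/
def facetSign (d : ℕ) (P F : Set (Fin d → ℝ)) : ℝ :=
  if ∃ x ∈ intrinsicInterior ℝ F, x ∈ PB d P then 1
  else if ∃ x ∈ intrinsicInterior ℝ F, x ∈ NB d P then -1
  else 0

/-- The Bernoulli polynomial `B_n(x)`, as a real polynomial. -/
def bernR (n : ℕ) : Polynomial ℝ := (Polynomial.bernoulli n).map (algebraMap ℚ ℝ)

/-- The `k`-th power sum polynomial `P_k(x) = (B_{k+1}(x+1) - B_{k+1}(0))/(k+1)`. -/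
def PkR (k : ℕ) : Polynomial ℝ :=
  Polynomial.C (((k : ℝ) + 1)⁻¹) *
    ((bernR (k + 1)).comp (Polynomial.X + 1) - Polynomial.C ((bernR (k + 1)).eval 0))

/-- The extension of the summation operation: for a polynomial `h(s) = Σ_k h_k s^k`,
`Σ_{s=1}^{u} h := h_0 u + Σ_{k ≥ 1} h_k P_k(u)`, as a polynomial in the upper bound `u`. -/
def extSumPoly (h : Polynomial ℝ) : Polynomial ℝ :=
  Polynomial.C (h.coeff 0) * Polynomial.X +
    ∑ k ∈ Finset.Icc 1 h.natDegree, Polynomial.C (h.coeff k) * PkR k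

/-- `fdPoly n a` is the polynomial (in the first variable `a_1`) expressing
`f_{n+1}(a_1, a 0, a 1, …)`, defined recursively by `f_1(a_1) = a_1` and
`f_d(a_1,…,a_d) = Σ_{s=1}^{a_1} f_{d-1}(a_2 s, a_3, …, a_d)` using the extended sum. -/
def fdPoly : ℕ → (ℕ → ℝ) → Polynomial ℝ
  | 0, _ => Polynomial.X
  | n + 1, a =>
      extSumPoly ((fdPoly n (fun i => a (i + 1))).comp (Polynomial.C (a 0) * Polynomial.X))

/-- `f_d(a_1, …, a_d)` where `a_k = a (k-1)` (0-indexed). -/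
def fd (d : ℕ) (a : ℕ → ℝ) : ℝ := (fdPoly (d - 1) (fun i => a (i + 1))).eval (a 0)

/-- `g_d(b_1, …, b_d) = f_d(b_1/b_0, b_2/b_1, …, b_d/b_{d-1})` where `b_k = b k` and
`b 0 = 1` by convention. -/
def gd (d : ℕ) (b : ℕ → ℝ) : ℝ := fd d (fun i => b (i + 1) / b i)

/-- `x̄` for an integer: `x̄ = x` if `x ≥ 0` and `x̄ = -x-1` if `x < 0`. -/
def barNat (n : ℤ) : ℕ := if 0 ≤ n then n.toNat else (-n - 1).toNat

/-- The half-open segment `Ω(conv(0,x))`: `(0,x]` if `x ≥ 0` and `(x,0]` if `x < 0`. -/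
def hoSeg (x : ℝ) : Set ℝ := if 0 ≤ x then Set.Ioc 0 x else Set.Ioc x 0

/-- The previous coordinate `s_{k-1}` of a point `s ∈ ℝ^d`, with `s_0 = 1`. -/
def sPrev (d : ℕ) (s : Fin d → ℝ) (k : Fin d) : ℝ :=
  if (k : ℕ) = 0 then 1 else s ⟨(k : ℕ) - 1, lt_of_le_of_lt (Nat.sub_le _ _) k.isLt⟩

/-- The nested sum `Σ_{s_1=1}^{⌊a_1 sp⌋¯} Σ_{s_2=1}^{⌊a_2 s_1⌋¯} ⋯ 1` over positive
integers. -/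
def nestedCount : ℕ → (ℕ → ℝ) → ℕ → ℕ
  | 0, _, _ => 1
  | n + 1, a, sp =>
      ∑ s ∈ Finset.Icc 1 (barNat ⌊a 0 * (sp : ℝ)⌋), nestedCount n (fun i => a (i + 1)) s

/-- The nested extended sum `Σ_{s_1=1}^{\bar{a_1 s_0}} ⋯ Σ_{s_d=1}^{\bar{a_d s_{d-1}}} 1`,
as a polynomial in `s_0`, where for positive `s` the bar is `a s` if `a > 0` and
`-a s - 1` if `a < 0`. -/
def barNested : ℕ → (ℕ → ℝ) → Polynomial ℝ
  | 0, _ => 1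
  | n + 1, a =>
      (extSumPoly (barNested n (fun i => a (i + 1)))).comp
        (if 0 < a 0 then Polynomial.C (a 0) * Polynomial.X
         else -(Polynomial.C (a 0) * Polynomial.X) - 1)

/-- Row vertex for the hat matrices: `v_{σ(p+1)}` for `p < d`. -/
def rowVert' (d : ℕ) (v : Fin (d + 1) → Fin d → ℝ) (σ : Equiv.Perm (Fin d)) (p : ℕ) :
    Fin d → ℝ :=
  if h : p < d then v (Fin.castSucc (σ ⟨p, h⟩)) else v (Fin.last d)

/-- The matrix `X̂(σ,k)` with entries `x̂_{σ(p),q} = x_{σ(p),q} - x_{d+1,q}`. -/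
def XhatM (d : ℕ) (v : Fin (d + 1) → Fin d → ℝ) (σ : Equiv.Perm (Fin d)) (k : ℕ) :
    Matrix (Fin k) (Fin k) ℝ :=
  Matrix.of fun p q =>
    coordN (rowVert' d v σ (p : ℕ)) (q : ℕ) - coordN (v (Fin.last d)) (q : ℕ)

/-- The matrix `Ŷ(σ,k)` with rows `(1, x̂_{σ(p),1},…,x̂_{σ(p),k-1})`. -/
def YhatM (d : ℕ) (v : Fin (d + 1) → Fin d → ℝ) (σ : Equiv.Perm (Fin d)) (k : ℕ) :
    Matrix (Fin k) (Fin k) ℝ :=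
  Matrix.of fun p q =>
    if (q : ℕ) = 0 then 1
    else coordN (rowVert' d v σ (p : ℕ)) ((q : ℕ) - 1) - coordN (v (Fin.last d)) ((q : ℕ) - 1)

/-- `ẑ(σ,k) = det X̂(σ,k) / det Ŷ(σ,k)`. -/
def zhat (d : ℕ) (v : Fin (d + 1) → Fin d → ℝ) (σ : Equiv.Perm (Fin d)) (k : ℕ) : ℝ :=
  (XhatM d v σ k).det / (YhatM d v σ k).det

end


set_option maxHeartbeats 1000000

section Helpers

variable {d : ℕ}

lemma projTo_apply_lt (d k : ℕ) (x : Fin d → ℝ) (i : Fin k) (h : (i : ℕ) < d) :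
    projTo d k x i = x ⟨(i : ℕ), h⟩ := dif_pos h

/-- `projTo` as a linear map. -/
def projL (d k : ℕ) : (Fin d → ℝ) →ₗ[ℝ] (Fin k → ℝ) where
  toFun := projTo d k
  map_add' x y := by
    funext i; simp only [projTo, Pi.add_apply]; split <;> simp
  map_smul' c x := by
    funext i; simp only [projTo, Pi.smul_apply, RingHom.id_apply, smul_eq_mul]
    split <;> simp

lemma projTo_sub (d k : ℕ) (x y : Fin d → ℝ) :
    projTo d k (x - y) = projTo d k x - projTo d k y := map_sub (projL d k) x y

lemma projTo_smul (d k : ℕ) (c : ℝ) (x : Fin d → ℝ) :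
    projTo d k (c • x) = c • projTo d k x := map_smul (projL d k) c x

lemma projTo_continuous (d k : ℕ) : Continuous (projTo d k) := by
  apply continuous_pi
  intro i
  by_cases h : (i : ℕ) < d
  · simp only [projTo, dif_pos h]; exact continuous_apply _
  · simp only [projTo, dif_neg h]; exact continuous_const

lemma lastCoord_eq (hd : 1 ≤ d) (x : Fin d → ℝ) :
    lastCoord d x = x ⟨d - 1, by omega⟩ := dif_pos (by omega)

lemma lastCoord_continuous (hd : 1 ≤ d) : Continuous (lastCoord d) := by
  have : lastCoord d = fun x : Fin d → ℝ => x ⟨d - 1, by omega⟩ := by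
    funext x; exact lastCoord_eq hd x
  rw [this]; exact continuous_apply _

/-- The last standard basis vector. -/
def eLast (d : ℕ) : Fin d → ℝ := fun j => if (j : ℕ) = d - 1 then 1 else 0

lemma projTo_eLast (hd : 1 ≤ d) : projTo d (d - 1) (eLast d) = 0 := by
  funext i
  have h : (i : ℕ) < d := lt_of_lt_of_le i.isLt (Nat.sub_le d 1)
  rw [projTo_apply_lt d (d - 1) _ i h]
  have : ((⟨(i : ℕ), h⟩ : Fin d) : ℕ) ≠ d - 1 := by
    have := i.isLt; simp only []; omega
  simp [eLast, this]

lemma lastCoord_eLast (hd : 1 ≤ d) : lastCoord d (eLast d) = 1 := by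
  rw [lastCoord_eq hd]; simp [eLast]

lemma eLast_ne_zero (hd : 1 ≤ d) : eLast d ≠ 0 := by
  intro h
  have := congrFun h ⟨d - 1, by omega⟩
  simp [eLast] at this

lemma sub_eq_smul_eLast (hd : 1 ≤ d) {x z : Fin d → ℝ}
    (h : projTo d (d - 1) x = projTo d (d - 1) z) :
    x - z = (lastCoord d x - lastCoord d z) • eLast d := by
  funext j
  by_cases hj : (j : ℕ) = d - 1
  · have hjj : j = ⟨d - 1, by omega⟩ := Fin.ext hj
    simp [eLast, hj, hjj, lastCoord_eq hd]
  · have hj' : (j : ℕ) < d - 1 := by have := j.isLt; omega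
    have := congrFun h ⟨(j : ℕ), hj'⟩
    rw [projTo_apply_lt d (d - 1) x _ (by omega), projTo_apply_lt d (d - 1) z _ (by omega)] at this
    simp only [Fin.eta] at this
    simp [eLast, hj, this]

lemma eq_of_proj_eq (hd : 1 ≤ d) {x z : Fin d → ℝ}
    (h : projTo d (d - 1) x = projTo d (d - 1) z)
    (hl : lastCoord d x = lastCoord d z) : x = z := by
  have := sub_eq_smul_eLast hd h
  rw [hl, sub_self, zero_smul, sub_eq_zero] at this
  exact this

lemma proj_mem_latticePts (hd : 1 ≤ d) {x : Fin d → ℝ} (hx : x ∈ latticePts d) :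
    projTo d (d - 1) x ∈ latticePts (d - 1) := by
  intro i
  obtain ⟨n, hn⟩ := hx ⟨(i : ℕ), lt_of_lt_of_le i.isLt (Nat.sub_le d 1)⟩
  exact ⟨n, by rw [projTo_apply_lt d (d - 1) x i (lt_of_lt_of_le i.isLt (Nat.sub_le d 1))]; exact hn⟩

lemma zero_mem_latticePts (k : ℕ) : (0 : Fin k → ℝ) ∈ latticePts k :=
  fun i => ⟨0, by simp⟩

lemma single_mem_latticePts (k : ℕ) (i : Fin k) : (Pi.single i (1 : ℝ)) ∈ latticePts k := by
  intro j
  by_cases h : j = i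
  · exact ⟨1, by subst h; simp⟩
  · exact ⟨0, by simp [Pi.single_eq_of_ne h]⟩

end Helpers


open Module


/-- On the affine span of any `d`-subset of the vertex set of a lattice-face polytope,
a point with lattice projection is a lattice point. -/
lemma key_aff (d : ℕ) (hd : 1 ≤ d) (V : Finset (Fin d → ℝ)) (hLF : IsLatticeFace d V)
    (U : Finset (Fin d → ℝ)) (hUV : U ⊆ V) (hUcard : U.card = d)
    (x : Fin d → ℝ) (hx : x ∈ affineSpan ℝ (U : Set (Fin d → ℝ)))
    (hlx : projTo d (d - 1) x ∈ latticePts (d - 1)) : x ∈ latticePts d := by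
  have hLU := hLF (d - 1) (by omega) U hUV (by omega)
  have hxmem : projTo d (d - 1) x ∈
      projTo d (d - 1) '' ((affineSpan ℝ (U : Set (Fin d → ℝ)) : Set (Fin d → ℝ)) ∩ latticePts d) := by
    rw [hLU]; exact hlx
  obtain ⟨z, ⟨hzA, hzL⟩, hzp⟩ := hxmem
  suffices hxz : x = z by rwa [hxz]
  by_contra hne
  -- the vertical direction lies in the direction of `affineSpan U`
  set W := vectorSpan ℝ (U : Set (Fin d → ℝ)) with hW
  have hsubW : x - z ∈ W := by
    have := AffineSubspace.vsub_mem_direction hx hzA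
    rwa [direction_affineSpan, vsub_eq_sub] at this
  have hc : lastCoord d x - lastCoord d z ≠ 0 := by
    intro h0
    exact hne (eq_of_proj_eq hd hzp.symm (by linarith [sub_eq_zero.mp h0]))
  have heW : eLast d ∈ W := by
    have hE : eLast d = (lastCoord d x - lastCoord d z)⁻¹ • (x - z) := by
      rw [sub_eq_smul_eLast hd hzp.symm, smul_smul, inv_mul_cancel₀ hc, one_smul]
    rw [hE]
    exact W.smul_mem _ hsubW
  -- finrank bound
  have hWle : finrank ℝ W ≤ d - 1 := by
    have himg : U.image id = U := Finset.image_id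
    have := finrank_vectorSpan_image_finset_le ℝ (id : (Fin d → ℝ) → (Fin d → ℝ)) U
      (n := d - 1) (by omega)
    rwa [himg] at this
  -- the projection restricted to W
  set f : W →ₗ[ℝ] (Fin (d - 1) → ℝ) := (projL d (d - 1)).comp W.subtype with hf
  have hrange : LinearMap.range f = ⊤ := by
    rw [← top_le_iff, ← (Pi.basisFun ℝ (Fin (d - 1))).span_eq, Submodule.span_le]
    rintro _ ⟨i, rfl⟩
    rw [Pi.basisFun_apply]
    -- find lattice points over `0` and over `single i 1`
    have h0 : (0 : Fin (d - 1) → ℝ) ∈ projTo d (d - 1) ''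
        ((affineSpan ℝ (U : Set (Fin d → ℝ)) : Set (Fin d → ℝ)) ∩ latticePts d) := by
      rw [hLU]; exact zero_mem_latticePts _
    have hi : (Pi.single i (1 : ℝ)) ∈ projTo d (d - 1) ''
        ((affineSpan ℝ (U : Set (Fin d → ℝ)) : Set (Fin d → ℝ)) ∩ latticePts d) := by
      rw [hLU]; exact single_mem_latticePts _ i
    obtain ⟨z0, ⟨hz0A, _⟩, hz0p⟩ := h0
    obtain ⟨zi, ⟨hziA, _⟩, hzip⟩ := hi
    have hvW : zi - z0 ∈ W := by
      have := AffineSubspace.vsub_mem_direction hziA hz0A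
      rwa [direction_affineSpan, vsub_eq_sub] at this
    refine ⟨⟨zi - z0, hvW⟩, ?_⟩
    show projTo d (d - 1) (zi - z0) = Pi.single i 1
    rw [projTo_sub, hz0p, hzip, sub_zero]
  have hker : LinearMap.ker f ≠ ⊥ := by
    intro hbot
    have hmem : (⟨eLast d, heW⟩ : W) ∈ LinearMap.ker f := by
      simp only [LinearMap.mem_ker, hf, LinearMap.comp_apply, Submodule.subtype_apply]
      exact projTo_eLast hd
    rw [hbot, Submodule.mem_bot] at hmem
    exact eLast_ne_zero hd (by simpa using congrArg Subtype.val hmem)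
  have hrn := LinearMap.finrank_range_add_finrank_ker f
  rw [hrange, finrank_top] at hrn
  have h1 : finrank ℝ (Fin (d - 1) → ℝ) = d - 1 := Module.finrank_fin_fun ℝ
  have hkpos : 0 < finrank ℝ (LinearMap.ker f) := by
    refine (Module.finrank_pos_iff (R := ℝ) (M := LinearMap.ker f)).mpr ?_
    rcases Submodule.ne_bot_iff _ |>.mp hker with ⟨v, hv, hv0⟩
    exact ⟨⟨v, hv⟩, 0, by simp [hv0]⟩
  omega


/-- A point of the hull of `V` that is not interior lies in the affine span of some
`d`-element subset of `V`. -/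
lemma key_cara (d : ℕ) (hd : 1 ≤ d) (V : Finset (Fin d → ℝ))
    (hspan : affineSpan ℝ (V : Set (Fin d → ℝ)) = ⊤)
    (x : Fin d → ℝ) (hx : x ∈ convexHull ℝ (V : Set (Fin d → ℝ)))
    (hni : x ∉ interior (convexHull ℝ (V : Set (Fin d → ℝ)))) :
    ∃ U : Finset (Fin d → ℝ), U ⊆ V ∧ U.card = d ∧
      x ∈ affineSpan ℝ (U : Set (Fin d → ℝ)) := by
  classical
  rw [convexHull_eq_union] at hx
  simp only [Set.mem_iUnion] at hx
  obtain ⟨t, hts, hai, hxt⟩ := hx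
  rw [Finset.convexHull_eq] at hxt
  obtain ⟨w, hw0, hw1, hcm⟩ := hxt
  set U₁ : Finset (Fin d → ℝ) := t.filter (fun u => w u ≠ 0) with hU₁
  have hU₁t : U₁ ⊆ t := Finset.filter_subset _ _
  have hsum1 : ∑ u ∈ U₁, w u = 1 := by
    rw [hU₁, Finset.sum_filter_ne_zero]; exact hw1
  have hxt : ∑ u ∈ t, w u • u = x := by
    rw [← hcm, Finset.centerMass_eq_of_sum_1 t id hw1]; rfl
  have hxsum : ∑ u ∈ U₁, w u • u = x := by
    rw [← hxt, hU₁]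
    exact Finset.sum_filter_of_ne (fun u _ h hw => h (by rw [hw, zero_smul]))
  have hpos : ∀ u ∈ U₁, 0 < w u := by
    intro u hu
    rw [hU₁, Finset.mem_filter] at hu
    exact lt_of_le_of_ne (hw0 u hu.1) (Ne.symm hu.2)
  have hai1 : AffineIndependent ℝ (fun p : ↥((U₁ : Set (Fin d → ℝ))) => (p : Fin d → ℝ)) :=
    hai.mono (Finset.coe_subset.mpr hU₁t)
  have hcard : U₁.card ≤ d + 1 := by
    have h1 := hai1.card_le_finrank_succ
    have h2 : Fintype.card ↥((U₁ : Set (Fin d → ℝ))) = U₁.card := by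
      simp
    have h3 : finrank ℝ (vectorSpan ℝ
        (Set.range (fun p : ↥((U₁ : Set (Fin d → ℝ))) => (p : Fin d → ℝ))))
        ≤ finrank ℝ (Fin d → ℝ) := Submodule.finrank_le _
    have h4 : finrank ℝ (Fin d → ℝ) = d := Module.finrank_fin_fun ℝ
    omega
  have hU₁V : U₁ ⊆ V := hU₁t.trans (Finset.coe_subset.mp hts)
  have hxc : x ∈ convexHull ℝ (U₁ : Set (Fin d → ℝ)) := by
    rw [Finset.convexHull_eq]
    refine ⟨w, fun u hu => hw0 u (hU₁t hu), hsum1, ?_⟩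
    rw [Finset.centerMass_eq_of_sum_1 _ id hsum1]
    exact hxsum
  by_cases hle : U₁.card ≤ d
  · -- extend U₁ to a d-element subset of V
    have hVne : V.Nonempty := by
      rcases V.eq_empty_or_nonempty with h | h
      · exfalso
        rw [h, Finset.coe_empty, AffineSubspace.span_empty] at hspan
        have h0 : (0 : Fin d → ℝ) ∈ (⊥ : AffineSubspace ℝ (Fin d → ℝ)) := by
          rw [hspan]; trivial
        exact h0
      · exact h
    have hVpos : 1 ≤ V.card := Finset.card_pos.mpr hVne
    have hVcard : d + 1 ≤ V.card := by
      have h5 := finrank_vectorSpan_image_finset_le ℝ (id : (Fin d → ℝ) → (Fin d → ℝ)) V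
        (n := V.card - 1) (by omega)
      rw [Finset.image_id] at h5
      have h6 : vectorSpan ℝ (V : Set (Fin d → ℝ)) = ⊤ := by
        rw [← direction_affineSpan, hspan, AffineSubspace.direction_top]
      rw [h6, finrank_top, Module.finrank_fin_fun] at h5
      omega
    obtain ⟨U, hU₁U, hUV, hUcard⟩ :=
      Finset.exists_subsuperset_card_eq hU₁V hle (by omega)
    refine ⟨U, hUV, hUcard, ?_⟩
    exact affineSpan_mono ℝ (Finset.coe_subset.mpr hU₁U)
      (convexHull_subset_affineSpan _ hxc)
  · -- U₁ has d+1 points: x is interior, contradiction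
    exfalso
    have hc1 : U₁.card = d + 1 := by omega
    have htop : affineSpan ℝ
        (Set.range (fun p : ↥((U₁ : Set (Fin d → ℝ))) => (p : Fin d → ℝ))) = ⊤ := by
      rw [hai1.affineSpan_eq_top_iff_card_eq_finrank_add_one]
      simp [hc1, Module.finrank_fin_fun]
    let b : AffineBasis ↥((U₁ : Set (Fin d → ℝ))) ℝ (Fin d → ℝ) := ⟨_, hai1, htop⟩
    have hsumuniv : ∑ i : ↥((U₁ : Set (Fin d → ℝ))), w ↑i = 1 := by
      rw [← hsum1]
      exact Finset.sum_finset_coe (fun u => w u) U₁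
    have hx' : x = (Finset.univ).affineCombination ℝ
        (fun p : ↥((U₁ : Set (Fin d → ℝ))) => (p : Fin d → ℝ)) (fun p => w ↑p) := by
      rw [Finset.affineCombination_eq_linear_combination _ _ _ hsumuniv, ← hxsum]
      exact (Finset.sum_finset_coe (fun u => w u • u) U₁).symm
    have hcoord : ∀ i, 0 < b.coord i x := by
      intro i
      have hb : ⇑b = (fun p : ↥((U₁ : Set (Fin d → ℝ))) => (p : Fin d → ℝ)) := rfl
      rw [hx', ← hb, b.coord_apply_combination_of_mem (Finset.mem_univ i) hsumuniv]
      exact hpos ↑i i.2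
    have hxint : x ∈ interior (convexHull ℝ (U₁ : Set (Fin d → ℝ))) := by
      have hrange : Set.range ⇑b = (U₁ : Set (Fin d → ℝ)) := Subtype.range_coe
      have := b.interior_convexHull
      rw [hrange] at this
      rw [this]
      exact hcoord
    exact hni (interior_mono (convexHull_mono (Finset.coe_subset.mpr hU₁V)) hxint)


lemma nb_not_interior {d : ℕ} (hd : 1 ≤ d) {P : Set (Fin d → ℝ)} {x : Fin d → ℝ}
    (hx : x ∈ NB d P) : x ∉ interior P := by
  intro h
  rw [mem_interior_iff_mem_nhds, Metric.mem_nhds_iff] at h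
  obtain ⟨ε, hε, hball⟩ := h
  set δ := ε / (‖eLast d‖ + 1) with hδdef
  have hpos : (0:ℝ) < ‖eLast d‖ + 1 := by positivity
  have hδ : 0 < δ := div_pos hε hpos
  have hlt : δ * ‖eLast d‖ < ε := by
    have h1 : δ * ‖eLast d‖ < δ * (‖eLast d‖ + 1) := by nlinarith [norm_nonneg (eLast d)]
    have h2 : δ * (‖eLast d‖ + 1) = ε := by
      rw [hδdef]; field_simp
    linarith
  have hmem : x - δ • eLast d ∈ P := by
    apply hball
    rw [Metric.mem_ball, dist_eq_norm]
    have hh : x - δ • eLast d - x = -(δ • eLast d) := by abel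
    rw [hh, norm_neg, norm_smul, Real.norm_eq_abs, abs_of_pos hδ]
    exact hlt
  have hproj : projTo d (d - 1) (x - δ • eLast d) = projTo d (d - 1) x := by
    rw [projTo_sub, projTo_smul, projTo_eLast hd, smul_zero, sub_zero]
  have hle := hx.2 _ hmem hproj
  have hlast : lastCoord d (x - δ • eLast d) = lastCoord d x - δ := by
    rw [lastCoord_eq hd, lastCoord_eq hd]
    simp [eLast]
  linarith [hle, hlast.symm.le]

lemma pb_not_interior {d : ℕ} (hd : 1 ≤ d) {P : Set (Fin d → ℝ)} {x : Fin d → ℝ}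
    (hx : x ∈ PB d P) : x ∉ interior P := by
  intro h
  rw [mem_interior_iff_mem_nhds, Metric.mem_nhds_iff] at h
  obtain ⟨ε, hε, hball⟩ := h
  set δ := ε / (‖eLast d‖ + 1) with hδdef
  have hpos : (0:ℝ) < ‖eLast d‖ + 1 := by positivity
  have hδ : 0 < δ := div_pos hε hpos
  have hlt : δ * ‖eLast d‖ < ε := by
    have h1 : δ * ‖eLast d‖ < δ * (‖eLast d‖ + 1) := by nlinarith [norm_nonneg (eLast d)]
    have h2 : δ * (‖eLast d‖ + 1) = ε := by
      rw [hδdef]; field_simp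
    linarith
  have hmem : x + δ • eLast d ∈ P := by
    apply hball
    rw [Metric.mem_ball, dist_eq_norm]
    have hh : x + δ • eLast d - x = δ • eLast d := by abel
    rw [hh, norm_smul, Real.norm_eq_abs, abs_of_pos hδ]
    exact hlt
  have hproj : projTo d (d - 1) (x + δ • eLast d) = projTo d (d - 1) x := by
    have := map_add (projL d (d - 1)) x (δ • eLast d)
    have h2 : projTo d (d - 1) (x + δ • eLast d)
        = projTo d (d - 1) x + projTo d (d - 1) (δ • eLast d) := this
    rw [h2, projTo_smul, projTo_eLast hd, smul_zero, add_zero]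
  have hle := hx.2 _ hmem hproj
  have hlast : lastCoord d (x + δ • eLast d) = lastCoord d x + δ := by
    rw [lastCoord_eq hd, lastCoord_eq hd]
    simp [eLast]
  linarith [hle, hlast.symm.le]


theorem proj_bijOn_boundary_latticePts
    (d : ℕ) (hd : 1 ≤ d) (V : Finset (Fin d → ℝ))
    (hspan : affineSpan ℝ (V : Set (Fin d → ℝ)) = ⊤)
    (hvert : (V : Set (Fin d → ℝ))
      = Set.extremePoints ℝ (convexHull ℝ (V : Set (Fin d → ℝ))))
    (hLF : IsLatticeFace d V) :
    Set.BijOn (projTo d (d - 1))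
        (latticePts d ∩ NB d (convexHull ℝ (V : Set (Fin d → ℝ))))
        (latticePts (d - 1) ∩ projTo d (d - 1) '' convexHull ℝ (V : Set (Fin d → ℝ)))
      ∧ Set.BijOn (projTo d (d - 1))
          (latticePts d ∩ PB d (convexHull ℝ (V : Set (Fin d → ℝ))))
          (latticePts (d - 1) ∩ projTo d (d - 1) '' convexHull ℝ (V : Set (Fin d → ℝ))) := by
  classical
  set P := convexHull ℝ (V : Set (Fin d → ℝ)) with hP
  have hcont : Continuous (projTo d (d - 1)) := projTo_continuous d (d - 1)
  have hlcont : Continuous (lastCoord d) := lastCoord_continuous hd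
  have hcompact : IsCompact P := V.finite_toSet.isCompact_convexHull (𝕜 := ℝ)
  constructor
  · refine ⟨?_, ?_, ?_⟩
    · rintro x ⟨hxl, hxb⟩
      exact ⟨proj_mem_latticePts hd hxl, ⟨x, hxb.1, rfl⟩⟩
    · rintro a ⟨hal, hab⟩ b ⟨hbl, hbb⟩ hab2
      exact eq_of_proj_eq hd hab2 (le_antisymm (hab.2 b hbb.1 hab2.symm) (hbb.2 a hab.1 hab2))
    · rintro y ⟨hyl, p, hpP, hpy⟩
      have hKc : IsCompact (P ∩ projTo d (d - 1) ⁻¹' {y}) :=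
        hcompact.inter_right (isClosed_singleton.preimage hcont)
      have hKne : (P ∩ projTo d (d - 1) ⁻¹' {y}).Nonempty := ⟨p, hpP, by simp [hpy]⟩
      obtain ⟨x, hxK, hmin⟩ := hKc.exists_isMinOn hKne hlcont.continuousOn
      have hxy : projTo d (d - 1) x = y := hxK.2
      have hxNB : x ∈ NB d P := by
        refine ⟨hxK.1, fun z hz hpz => ?_⟩
        exact isMinOn_iff.mp hmin z ⟨hz, by rw [Set.mem_preimage, Set.mem_singleton_iff, hpz, hxy]⟩
      obtain ⟨U, hUV, hUcard, hxU⟩ := key_cara d hd V hspan x hxK.1 (nb_not_interior hd hxNB)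
      have hxl : x ∈ latticePts d :=
        key_aff d hd V hLF U hUV hUcard x hxU (by rw [hxy]; exact hyl)
      exact ⟨x, ⟨hxl, hxNB⟩, hxy⟩
  · refine ⟨?_, ?_, ?_⟩
    · rintro x ⟨hxl, hxb⟩
      exact ⟨proj_mem_latticePts hd hxl, ⟨x, hxb.1, rfl⟩⟩
    · rintro a ⟨hal, hab⟩ b ⟨hbl, hbb⟩ hab2
      exact eq_of_proj_eq hd hab2 (le_antisymm (hbb.2 a hab.1 hab2) (hab.2 b hbb.1 hab2.symm))
    · rintro y ⟨hyl, p, hpP, hpy⟩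
      have hKc : IsCompact (P ∩ projTo d (d - 1) ⁻¹' {y}) :=
        hcompact.inter_right (isClosed_singleton.preimage hcont)
      have hKne : (P ∩ projTo d (d - 1) ⁻¹' {y}).Nonempty := ⟨p, hpP, by simp [hpy]⟩
      obtain ⟨x, hxK, hmax⟩ := hKc.exists_isMaxOn hKne hlcont.continuousOn
      have hxy : projTo d (d - 1) x = y := hxK.2
      have hxPB : x ∈ PB d P := by
        refine ⟨hxK.1, fun z hz hpz => ?_⟩
        exact isMaxOn_iff.mp hmax z ⟨hz, by rw [Set.mem_preimage, Set.mem_singleton_iff, hpz, hxy]⟩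
      obtain ⟨U, hUV, hUcard, hxU⟩ := key_cara d hd V hspan x hxK.1 (pb_not_interior hd hxPB)
      have hxl : x ∈ latticePts d :=
        key_aff d hd V hLF U hUV hUcard x hxU (by rw [hxy]; exact hyl)
      exact ⟨x, ⟨hxl, hxPB⟩, hxy⟩
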